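/- Let p be an odd prime, let m ≥ 1, let N be the p-adic valuation of m, and let 0 ≤ s ≤ N. Then the p-adic valuation of S(m, p^s − 1) is exactly N − s; i.e., p^{N−s} divides S(m, p^s − 1) but p^{N−s+1} does not. (The key odd-primary valuation computation in the proof of Theorem 4.4.) -/

import Mathlib

open Finset

/-- `S(m,i) = Σ_{k=1}^{m} C(2k-1, i)`. -/
def Smi (m i : ℕ) : ℕ := ∑ k ∈ Finset.Icc 1 m, (2*k-1).choose i

lemma smi_zero (i : ℕ) : Smi 0 i = 0 := by simp [Smi]

lemma smi_succ (m i : ℕ) : Smi (m+1) i = Smi m i + (2*m+1).choose i := by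
  have e : 2*(m+1)-1 = 2*m+1 := by omega
  rw [Smi, Finset.sum_Icc_succ_top (by omega), e, ← Smi]

lemma rec0 (m n : ℕ) : 2 * Smi m (n+1) + Smi m n = (2*m+1).choose (n+2) := by
  induction m with
  | zero =>
    have h : (2*0+1).choose (n+2) = 0 := Nat.choose_eq_zero_of_lt (by omega)
    simp [smi_zero, h]
  | succ m ih =>
    rw [smi_succ, smi_succ]
    have e : 2*(m+1)+1 = (2*m+1)+1+1 := by ring
    rw [e]
    have h1 : ((2*m+1)+1+1).choose ((n+1)+1) = ((2*m+1)+1).choose (n+1) + ((2*m+1)+1).choose ((n+1)+1) := Nat.choose_succ_succ _ _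
    have h2 : ((2*m+1)+1).choose (n+1) = (2*m+1).choose n + (2*m+1).choose (n+1) := Nat.choose_succ_succ _ _
    have h3 : ((2*m+1)+1).choose ((n+1)+1) = (2*m+1).choose (n+1) + (2*m+1).choose ((n+1)+1) := Nat.choose_succ_succ _ _
    have e2 : (n+1)+1 = n+2 := rfl
    rw [e2] at h1 h3
    omega

lemma L1 (m n : ℕ) : (2:ℤ)^(n+1) * Smi m n =
    (-1)^(n+1) * ((∑ t ∈ Finset.range (n+1), (-1:ℤ)^(t+1) * 2^t * ((2*m+1).choose (t+1) : ℤ)) + 1) := by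
  induction n with
  | zero =>
    have h0 : Smi m 0 = m := by simp [Smi]
    have h1 : (2*m+1).choose 1 = 2*m+1 := Nat.choose_one_right _
    rw [Finset.sum_range_one, h0, h1]
    push_cast
    ring
  | succ n ih =>
    rw [Finset.sum_range_succ]
    have hrec := rec0 m n
    have hrecz : 2 * (Smi m (n+1) : ℤ) + (Smi m n : ℤ) = ((2*m+1).choose (n+2) : ℤ) := by
      exact_mod_cast hrec
    have e2 : (n+1)+1 = n+2 := rfl
    rw [e2] at *
    rcases Nat.even_or_odd n with he | ho
    · have hE1 : (-1:ℤ)^(n+1) = -1 := Odd.neg_one_pow (he.add_one)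
      have hE2 : (-1:ℤ)^(n+2) = 1 := Even.neg_one_pow (by exact he.add_one.add_one)
      rw [hE1] at ih
      rw [hE2]
      linear_combination (-1) * ih + 2^(n+1) * hrecz
    · have hE1 : (-1:ℤ)^(n+1) = 1 := Even.neg_one_pow (ho.add_one)
      have hE2 : (-1:ℤ)^(n+2) = -1 := Odd.neg_one_pow (by exact ho.add_one.add_one)
      rw [hE1] at ih
      rw [hE2]
      linear_combination (-1) * ih + 2^(n+1) * hrecz

lemma key (m j : ℕ) :
    (2:ℤ)^(2*j+1) * Smi m (2*j) =
      2^(2*j) * ((2*m).choose (2*j+1) : ℤ) -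
        ∑ t ∈ Finset.range (2*j), (-2:ℤ)^t * ((2*m).choose (t+1) : ℤ) := by
  have h := L1 m (2*j)
  have hE : (-1:ℤ)^(2*j+1) = -1 := Odd.neg_one_pow ⟨j, by ring⟩
  rw [hE] at h
  have pascal : ∀ t : ℕ, ((2*m+1).choose (t+1) : ℤ) = ((2*m).choose t : ℤ) + ((2*m).choose (t+1) : ℤ) := by
    intro t
    exact_mod_cast Nat.choose_succ_succ (2*m) t
  have hsplit : ∑ t ∈ Finset.range (2*j+1), (-1:ℤ)^(t+1) * 2^t * ((2*m+1).choose (t+1) : ℤ)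
      = (∑ t ∈ Finset.range (2*j+1), (-1:ℤ)^(t+1) * 2^t * ((2*m).choose t : ℤ))
      + (∑ t ∈ Finset.range (2*j+1), (-1:ℤ)^(t+1) * 2^t * ((2*m).choose (t+1) : ℤ)) := by
    rw [← Finset.sum_add_distrib]
    exact Finset.sum_congr rfl fun t _ => by rw [pascal t]; ring
  have h1 : ∑ t ∈ Finset.range (2*j+1), (-1:ℤ)^(t+1) * 2^t * ((2*m).choose t : ℤ)
      = (∑ t ∈ Finset.range (2*j), (-1:ℤ)^(t+1+1) * 2^(t+1) * ((2*m).choose (t+1) : ℤ)) + (-1) := by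
    rw [Finset.sum_range_succ']
    norm_num
  have h2 : ∑ t ∈ Finset.range (2*j+1), (-1:ℤ)^(t+1) * 2^t * ((2*m).choose (t+1) : ℤ)
      = (∑ t ∈ Finset.range (2*j), (-1:ℤ)^(t+1) * 2^t * ((2*m).choose (t+1) : ℤ))
        + (-1) * 2^(2*j) * ((2*m).choose (2*j+1) : ℤ) := by
    rw [Finset.sum_range_succ, hE]
  have h3 : (∑ t ∈ Finset.range (2*j), (-1:ℤ)^(t+1+1) * 2^(t+1) * ((2*m).choose (t+1) : ℤ))
      + (∑ t ∈ Finset.range (2*j), (-1:ℤ)^(t+1) * 2^t * ((2*m).choose (t+1) : ℤ))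
      = ∑ t ∈ Finset.range (2*j), (-2:ℤ)^t * ((2*m).choose (t+1) : ℤ) := by
    rw [← Finset.sum_add_distrib]
    refine Finset.sum_congr rfl fun t _ => ?_
    rw [show ((-2:ℤ))^t = (-1)^t * 2^t from by rw [← neg_one_mul, mul_pow]]
    ring
  rw [hsplit, h1, h2] at h
  linear_combination h - h3

lemma Lb (p m s t : ℕ) (hp : p.Prime) (hm : 1 ≤ m) (hs : s ≤ m.factorization p)
    (ht1 : 1 ≤ t) (ht2 : t < p^s) : p^(m.factorization p - s + 1) ∣ (2*m).choose t := by
  set N := m.factorization p with hN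
  have hpN : p ^ N ∣ m := Nat.ordProj_dvd m p
  have hmN : p^N ≤ m := Nat.le_of_dvd (by omega) hpN
  have hsN : p^s ≤ p^N := Nat.pow_le_pow_right hp.pos hs
  have hts : t ≤ 2*m := by omega
  have hc0 : 0 < (2*m).choose t := Nat.choose_pos hts
  have hkey : (2*m) * ((2*m-1).choose (t-1)) = (2*m).choose t * t := by
    have h := Nat.add_one_mul_choose_eq (2*m-1) (t-1)
    have e1 : 2*m-1+1 = 2*m := by omega
    have e2 : t-1+1 = t := by omega
    rwa [e1, e2] at h
  have hdvd : p^N ∣ (2*m).choose t * t := by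
    rw [← hkey]
    exact Dvd.dvd.mul_right (hpN.trans ⟨2, by ring⟩) _
  have hs1 : 1 ≤ s := by
    rcases Nat.eq_zero_or_pos s with rfl | h
    · simp at ht2; omega
    · exact h
  have htf : t.factorization p ≤ s - 1 := by
    by_contra hc
    have : p^s ∣ t := (Nat.Prime.pow_dvd_iff_le_factorization hp (by omega)).mpr (by omega)
    exact absurd (Nat.le_of_dvd (by omega) this) (by omega)
  have hN_le : N ≤ ((2*m).choose t).factorization p + t.factorization p := by
    have h := (Nat.Prime.pow_dvd_iff_le_factorization hp (n := (2*m).choose t * t) (by positivity)).mp hdvd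
    rwa [Nat.factorization_mul (by omega) (by omega), Finsupp.add_apply] at h
  exact (Nat.Prime.pow_dvd_iff_le_factorization hp (by omega)).mpr (by omega)

lemma Lc (p : ℕ) (hp : p.Prime) : ∀ s a : ℕ, 1 ≤ a → p^s ∣ a → ¬ p ∣ (a-1).choose (p^s - 1) := by
  intro s
  induction s with
  | zero =>
    intro a ha _
    simpa using hp.ne_one
  | succ s ih =>
    intro a ha hdvd
    haveI : Fact p.Prime := ⟨hp⟩
    have hp2 : 2 ≤ p := hp.two_le
    have hpa : p ∣ a := dvd_trans (dvd_pow_self p (Nat.succ_ne_zero s)) hdvd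
    obtain ⟨q, rfl⟩ := hpa
    have hq1 : 1 ≤ q := by
      rcases Nat.eq_zero_or_pos q with rfl | h
      · simp at ha
      · exact h
    obtain ⟨q', rfl⟩ : ∃ q', q = q'+1 := ⟨q-1, by omega⟩
    have hqs : p^s ∣ q'+1 := by
      have h : p * p^s ∣ p * (q'+1) := by rwa [pow_succ'] at hdvd
      exact (mul_dvd_mul_iff_left (by omega : p ≠ 0)).mp h
    have hmul : p * (q'+1) = (p-1) + p * q' + 1 := by
      have : p * (q'+1) = p*q' + p := by ring
      omega
    have hps : p^(s+1) = (p-1) + p * (p^s - 1) + 1 := by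
      have h1 : p^(s+1) = p * p^s := by rw [pow_succ']
      have h2 : p * p^s = p * (p^s - 1) + p := by
        have h3 : 1 ≤ p^s := Nat.one_le_pow _ _ (by omega)
        have : p * p^s = p * (p^s - 1 + 1) := by rw [Nat.sub_add_cancel h3]
        rw [this]; ring
      omega
    -- compute mods and divs
    have hmod1 : (p * (q'+1) - 1) % p = p - 1 := by
      rw [show p * (q'+1) - 1 = (p-1) + p * q' from by omega, Nat.add_mul_mod_self_left,
        Nat.mod_eq_of_lt (by omega)]
    have hdiv1 : (p * (q'+1) - 1) / p = q' := by
      rw [show p * (q'+1) - 1 = (p-1) + p * q' from by omega, Nat.add_mul_div_left _ _ (by omega : 0 < p),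
        Nat.div_eq_of_lt (by omega)]
      omega
    have hmod2 : (p^(s+1) - 1) % p = p - 1 := by
      rw [show p^(s+1) - 1 = (p-1) + p * (p^s - 1) from by omega, Nat.add_mul_mod_self_left,
        Nat.mod_eq_of_lt (by omega)]
    have hdiv2 : (p^(s+1) - 1) / p = p^s - 1 := by
      rw [show p^(s+1) - 1 = (p-1) + p * (p^s - 1) from by omega, Nat.add_mul_div_left _ _ (by omega : 0 < p),
        Nat.div_eq_of_lt (by omega)]
      omega
    intro hdv
    have lucas := Choose.choose_modEq_choose_mod_mul_choose_div_nat (p := p) (n := p*(q'+1)-1) (k := p^(s+1)-1)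
    rw [hmod1, hdiv1, hmod2, hdiv2, Nat.choose_self, one_mul] at lucas
    have hdv' : p ∣ q'.choose (p^s - 1) :=
      (Nat.modEq_zero_iff_dvd).mp (lucas.symm.trans ((Nat.modEq_zero_iff_dvd).mpr hdv))
    exact ih (q'+1) hq1 hqs hdv'

/-- The odd-primary valuation computation in the proof of Theorem 4.4: for an odd
prime `p`, with `N` the `p`-adic valuation of `m` and `0 ≤ s ≤ N`, the `p`-adic
valuation of `S(m, p^s - 1)` is exactly `N - s`. -/
theorem stmt10 (p m s : ℕ) (hp : p.Prime) (hodd : p ≠ 2) (hm : 1 ≤ m)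
    (hs : s ≤ m.factorization p) :
    p ^ (m.factorization p - s) ∣ Smi m (p^s - 1) ∧
    ¬ p ^ (m.factorization p - s + 1) ∣ Smi m (p^s - 1) := by
  have hp2 : 2 ≤ p := hp.two_le
  set N := m.factorization p with hN
  set r := N - s with hr
  have hrs : r + s = N := by omega
  have hoddp : Odd p := hp.odd_of_ne_two hodd
  obtain ⟨j, hj⟩ : Odd (p^s) := hoddp.pow
  have hps1 : p^s - 1 = 2*j := by omega
  have hpspos : 1 ≤ p^s := Nat.one_le_pow _ _ (by omega)
  have hpN : p ^ N ∣ m := Nat.ordProj_dvd m p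
  have hmN : p^N ≤ m := Nat.le_of_dvd (by omega) hpN
  have hsN : p^s ≤ p^N := Nat.pow_le_pow_right (by omega) hs
  have hpsm : p^s ∣ m := dvd_trans (pow_dvd_pow p hs) hpN
  have hCmain : (2*m) * ((2*m-1).choose (p^s-1)) = (2*m).choose (p^s) * p^s := by
    have h := Nat.add_one_mul_choose_eq (2*m-1) (p^s-1)
    have e1 : 2*m-1+1 = 2*m := by omega
    have e2 : p^s-1+1 = p^s := by omega
    rwa [e1, e2] at h
  have hcop2 : Nat.Coprime p 2 := (Nat.coprime_primes hp Nat.prime_two).mpr hodd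
  have hTsum : ((p:ℤ))^(r+1) ∣ ∑ t ∈ Finset.range (2*j), (-2:ℤ)^t * ((2*m).choose (t+1) : ℤ) := by
    apply Finset.dvd_sum
    intro t htmem
    have htlt : t + 1 < p^s := by
      have := Finset.mem_range.mp htmem
      omega
    have hd : p^(r+1) ∣ (2*m).choose (t+1) := by
      have h := Lb p m s (t+1) hp hm hs (by omega) htlt
      rwa [← hN, ← hr] at h
    have hdz : ((p:ℤ))^(r+1) ∣ ((2*m).choose (t+1) : ℤ) := by exact_mod_cast hd
    exact Dvd.dvd.mul_left hdz _
  have hkey := key m j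
  have hCdvd : p^r ∣ (2*m).choose (p^s) := by
    have h1 : p^r * p^s ∣ ((2*m).choose (p^s)) * p^s := by
      rw [← pow_add, hrs, ← hCmain]
      exact (hpN.trans ⟨2, by ring⟩).mul_right _
    exact (mul_dvd_mul_iff_right (show (p:ℕ)^s ≠ 0 by positivity)).mp h1
  have hZ1 : ((p:ℤ))^r ∣ ((2:ℤ)^(2*j+1) * (Smi m (2*j) : ℤ)) := by
    rw [hkey]
    have hCdvd' : p^r ∣ (2*m).choose (2*j+1) := by rwa [hj] at hCdvd
    apply dvd_sub
    · exact Dvd.dvd.mul_left (by exact_mod_cast hCdvd') _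
    · exact (pow_dvd_pow _ (by omega)).trans hTsum
  have hN1 : p^r ∣ 2^(2*j+1) * Smi m (2*j) := by
    have h : ((p^r : ℕ) : ℤ) ∣ (((2^(2*j+1) * Smi m (2*j)) : ℕ) : ℤ) := by push_cast; exact hZ1
    exact_mod_cast h
  have part1 : p^r ∣ Smi m (2*j) := Nat.Coprime.dvd_of_dvd_mul_left (Nat.Coprime.pow _ _ hcop2) hN1
  refine ⟨by rw [hps1]; exact part1, ?_⟩
  rw [hps1]
  intro hcon
  have hZ2 : ((p:ℤ))^(r+1) ∣ (2:ℤ)^(2*j) * ((2*m).choose (2*j+1) : ℤ) := by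
    have h1 : ((p:ℤ))^(r+1) ∣ (2:ℤ)^(2*j+1) * (Smi m (2*j) : ℤ) := by
      have h2 : ((p:ℤ))^(r+1) ∣ ((Smi m (2*j) : ℕ) : ℤ) := by exact_mod_cast hcon
      exact h2.mul_left _
    have h3 := dvd_add h1 hTsum
    have e : (2:ℤ)^(2*j) * ((2*m).choose (2*j+1) : ℤ)
        = (2:ℤ)^(2*j+1) * (Smi m (2*j) : ℤ)
          + ∑ t ∈ Finset.range (2*j), (-2:ℤ)^t * ((2*m).choose (t+1) : ℤ) := by
      linear_combination -hkey
    rw [e]; exact h3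
  have hN2 : p^(r+1) ∣ 2^(2*j) * ((2*m).choose (2*j+1)) := by
    have h : ((p^(r+1) : ℕ) : ℤ) ∣ (((2^(2*j) * ((2*m).choose (2*j+1))) : ℕ) : ℤ) := by
      push_cast; exact hZ2
    exact_mod_cast h
  have hCd2 : p^(r+1) ∣ (2*m).choose (p^s) := by
    have h := Nat.Coprime.dvd_of_dvd_mul_left (Nat.Coprime.pow _ _ hcop2) hN2
    rwa [show 2*j+1 = p^s from by omega] at h
  have hbig : p^(N+1) ∣ 2*m * ((2*m-1).choose (p^s-1)) := by
    rw [hCmain, show N+1 = (r+1)+s from by omega, pow_add]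
    exact mul_dvd_mul hCd2 dvd_rfl
  have hnotd : ¬ p ∣ (2*m-1).choose (p^s-1) := Lc p hp s (2*m) (by omega) (hpsm.mul_left 2)
  have hcopC : Nat.Coprime (p^(N+1)) ((2*m-1).choose (p^s-1)) :=
    Nat.Coprime.pow_left _ ((hp.coprime_iff_not_dvd).mpr hnotd)
  have h2m : p^(N+1) ∣ 2*m := Nat.Coprime.dvd_of_dvd_mul_right hcopC hbig
  have hmm : p^(N+1) ∣ m := Nat.Coprime.dvd_of_dvd_mul_left (Nat.Coprime.pow_left _ hcop2) h2m
  exact (Nat.pow_succ_factorization_not_dvd (by omega) hp) hmm
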